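/- If u is a nonnegative continuous function on the closed unit disc, subharmonic on {u > 0}, with Δu ≥ 1 on {u > 0} and u(0) > 0, then the function v(x,y) = u(x,y) − (1/4)(x² + y²) is subharmonic on the open set ω = {u > 0}, and v attains a positive value at 0 while being ≤ sup u − 1/4 ... ≤ 0 on ∂ω if sup u ≤ 1/4; hence sup u > 1/4 by the maximum principle. -/

import Mathlib

open Metric

/-- The Laplacian Δf = f_xx + f_yy on ℂ ≅ ℝ². -/
noncomputable def lap (f : ℂ → ℝ) (z : ℂ) : ℝ :=
  fderiv ℝ (fun w => fderiv ℝ f w 1) z 1 +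
  fderiv ℝ (fun w => fderiv ℝ f w Complex.I) z Complex.I

lemma hasFDerivAt_quad (c : ℝ) (w : ℂ) :
    HasFDerivAt (fun w : ℂ => c * (w.re ^ 2 + w.im ^ 2))
      ((c * (2 * w.re)) • (Complex.reCLM : ℂ →L[ℝ] ℝ)
        + (c * (2 * w.im)) • (Complex.imCLM : ℂ →L[ℝ] ℝ)) w := by
  have hre : HasFDerivAt (fun w : ℂ => w.re) (Complex.reCLM : ℂ →L[ℝ] ℝ) w :=
    Complex.reCLM.hasFDerivAt
  have him : HasFDerivAt (fun w : ℂ => w.im) (Complex.imCLM : ℂ →L[ℝ] ℝ) w :=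
    Complex.imCLM.hasFDerivAt
  have h := ((hre.mul hre).add (him.mul him)).const_mul c
  have heq : (fun w : ℂ => c * (w.re ^ 2 + w.im ^ 2))
      = fun w : ℂ => c * (w.re * w.re + w.im * w.im) := by
    funext v; ring
  rw [heq]
  refine h.congr_fderiv ?_
  ext v
  simp
  ring

/-- On an open set where `u` is C², subtracting `c·(x²+y²)` lowers the
Laplacian by `4c`. -/
lemma lap_sub_quad (u : ℂ → ℝ) {s : Set ℂ} (hs : IsOpen s)
    (hC2 : ContDiffOn ℝ 2 u s) {z : ℂ} (hz : z ∈ s) (c : ℝ) :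
    lap (fun w => u w - c * (w.re ^ 2 + w.im ^ 2)) z = lap u z - 4 * c := by
  have hmem : s ∈ nhds z := hs.mem_nhds hz
  have hCat : ContDiffAt ℝ 2 u z := hC2.contDiffAt hmem
  have hdf : DifferentiableAt ℝ (fderiv ℝ u) z :=
    (hCat.fderiv_right (by norm_num : (1 : WithTop ℕ∞) + 1 ≤ 2)).differentiableAt one_ne_zero
  have key : ∀ e : ℂ,
      fderiv ℝ (fun w => fderiv ℝ (fun w => u w - c * (w.re ^ 2 + w.im ^ 2)) w e) z e
        = fderiv ℝ (fun w => fderiv ℝ u w e) z e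
          - (c * (2 * e.re) * e.re + c * (2 * e.im) * e.im) := by
    intro e
    have heq : (fun w => fderiv ℝ (fun w => u w - c * (w.re ^ 2 + w.im ^ 2)) w e)
        =ᶠ[nhds z] (fun w => fderiv ℝ u w e - (c * (2 * w.re) * e.re + c * (2 * w.im) * e.im)) := by
      filter_upwards [hmem] with w hw
      have hu : DifferentiableAt ℝ u w :=
        (hC2.contDiffAt (hs.mem_nhds hw)).differentiableAt (by norm_num)
      have hq := hasFDerivAt_quad c w
      have hder : fderiv ℝ (fun w => u w - c * (w.re ^ 2 + w.im ^ 2)) w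
          = fderiv ℝ u w - ((c * (2 * w.re)) • (Complex.reCLM : ℂ →L[ℝ] ℝ)
              + (c * (2 * w.im)) • (Complex.imCLM : ℂ →L[ℝ] ℝ)) :=
        (hu.hasFDerivAt.sub hq).fderiv
      rw [hder]
      simp
    rw [heq.fderiv_eq]
    have hf1 : DifferentiableAt ℝ (fun w => fderiv ℝ u w e) z :=
      (ContinuousLinearMap.apply ℝ ℝ e).differentiableAt.comp z hdf
    have hf2 : HasFDerivAt (fun w : ℂ => c * (2 * w.re) * e.re + c * (2 * w.im) * e.im)
        ((c * 2 * e.re) • (Complex.reCLM : ℂ →L[ℝ] ℝ)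
          + (c * 2 * e.im) • (Complex.imCLM : ℂ →L[ℝ] ℝ)) z := by
      have hre : HasFDerivAt (fun w : ℂ => w.re) (Complex.reCLM : ℂ →L[ℝ] ℝ) z :=
        Complex.reCLM.hasFDerivAt
      have him : HasFDerivAt (fun w : ℂ => w.im) (Complex.imCLM : ℂ →L[ℝ] ℝ) z :=
        Complex.imCLM.hasFDerivAt
      have h := ((hre.const_mul (c * 2 * e.re)).add (him.const_mul (c * 2 * e.im)))
      have hfun : (fun w : ℂ => c * (2 * w.re) * e.re + c * (2 * w.im) * e.im)
          = fun w : ℂ => c * 2 * e.re * w.re + c * 2 * e.im * w.im := by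
        funext w; ring
      rw [hfun]; exact h
    have hder2 : fderiv ℝ (fun w => fderiv ℝ u w e
          - (c * (2 * w.re) * e.re + c * (2 * w.im) * e.im)) z
        = fderiv ℝ (fun w => fderiv ℝ u w e) z
          - ((c * 2 * e.re) • (Complex.reCLM : ℂ →L[ℝ] ℝ)
            + (c * 2 * e.im) • (Complex.imCLM : ℂ →L[ℝ] ℝ)) :=
      (hf1.hasFDerivAt.sub hf2).fderiv
    rw [hder2]
    simp
    ring
  have k1 := key 1
  have kI := key Complex.I
  simp only [Complex.one_re, Complex.one_im, Complex.I_re, Complex.I_im] at k1 kI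
  unfold lap
  rw [k1, kI]
  ring

/-- If `g` has a local max at `0`, is differentiable near `0`, and its
derivative has derivative `a` at `0`, then `a ≤ 0`. -/
lemma second_deriv_nonpos {g : ℝ → ℝ} {a : ℝ} (hmax : IsLocalMax g 0)
    (hd : ∀ᶠ t in nhds (0 : ℝ), DifferentiableAt ℝ g t)
    (h2 : HasDerivAt (deriv g) a 0) : a ≤ 0 := by
  by_contra hcon
  push_neg at hcon
  have h0 : deriv g 0 = 0 := hmax.deriv_eq_zero
  have hslope := hasDerivAt_iff_tendsto_slope.mp h2
  have hpos' : ∀ᶠ t in nhdsWithin (0 : ℝ) {(0 : ℝ)}ᶜ, 0 < slope (deriv g) 0 t :=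
    hslope.eventually (eventually_gt_nhds hcon)
  rw [eventually_nhdsWithin_iff] at hpos'
  have hposderiv : ∀ᶠ t in nhds (0 : ℝ), 0 < t → 0 < deriv g t := by
    filter_upwards [hpos'] with t ht htpos
    have hne : t ∈ ({(0 : ℝ)}ᶜ : Set ℝ) := by simp [ne_of_gt htpos]
    have := ht hne
    rw [slope_def_field, h0] at this
    have h' : 0 < deriv g t / t := by simpa using this
    by_contra hle
    push_neg at hle
    have : deriv g t / t ≤ 0 := div_nonpos_of_nonpos_of_nonneg hle (le_of_lt htpos)
    linarith
  have hall : ∀ᶠ t in nhds (0 : ℝ),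
      DifferentiableAt ℝ g t ∧ (0 < t → 0 < deriv g t) ∧ g t ≤ g 0 :=
    hd.and (hposderiv.and hmax)
  rw [Metric.eventually_nhds_iff] at hall
  obtain ⟨δ, hδpos, hδ⟩ := hall
  have hhalf : ∀ t ∈ Set.Icc (0 : ℝ) (δ / 2), dist t 0 < δ := by
    intro t ht
    rw [Real.dist_eq, sub_zero, abs_of_nonneg ht.1]
    linarith [ht.2]
  have hmono : StrictMonoOn g (Set.Icc (0 : ℝ) (δ / 2)) := by
    apply strictMonoOn_of_deriv_pos (convex_Icc _ _)
    · intro t ht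
      exact ((hδ (hhalf t ht)).1).continuousAt.continuousWithinAt
    · intro t ht
      rw [interior_Icc] at ht
      exact (hδ (hhalf t ⟨le_of_lt ht.1, le_of_lt ht.2⟩)).2.1 ht.1
  have h1 : g 0 < g (δ / 2) :=
    hmono (Set.left_mem_Icc.mpr (by linarith)) (Set.right_mem_Icc.mpr (by linarith))
      (by linarith)
  have hmemI : dist (δ / 2) 0 < δ := by
    rw [Real.dist_eq, sub_zero, abs_of_nonneg (by linarith : (0:ℝ) ≤ δ / 2)]
    linarith
  have h2' : g (δ / 2) ≤ g 0 := (hδ hmemI).2.2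
  linarith

/-- At a local maximum of a C² function, the Laplacian is nonpositive. -/
lemma lap_nonpos_of_isLocalMax (f : ℂ → ℝ) (z : ℂ) (hf : ContDiffAt ℝ 2 f z)
    (hmax : IsLocalMax f z) : lap f z ≤ 0 := by
  have key : ∀ e : ℂ, fderiv ℝ (fun w => fderiv ℝ f w e) z e ≤ 0 := by
    intro e
    set φ : ℝ → ℂ := fun t => z + t • e with hφdef
    have hφ : ∀ t : ℝ, HasDerivAt φ e t := by
      intro t
      have h := ((hasDerivAt_id t).smul_const e).const_add z
      simpa [hφdef] using h
    have hφ0 : φ 0 = z := by simp [hφdef]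
    have hφtendsto : Filter.Tendsto φ (nhds 0) (nhds z) := by
      have := (hφ 0).continuousAt.tendsto
      rwa [hφ0] at this
    set g : ℝ → ℝ := fun t => f (φ t) with hgdef
    have hgmax : IsLocalMax g 0 := by
      have := hφtendsto.eventually hmax
      filter_upwards [this] with t ht
      simpa [hgdef, hφ0] using ht
    have hev : ∀ᶠ w in nhds z, ContDiffAt ℝ 2 f w := hf.eventually (by norm_num)
    have hg' : ∀ᶠ t in nhds (0 : ℝ), HasDerivAt g (fderiv ℝ f (φ t) e) t := by
      filter_upwards [hφtendsto.eventually hev] with t ht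
      have hfd : DifferentiableAt ℝ f (φ t) := ht.differentiableAt (by norm_num)
      exact hfd.hasFDerivAt.comp_hasDerivAt t (hφ t)
    have hd : ∀ᶠ t in nhds (0 : ℝ), DifferentiableAt ℝ g t :=
      hg'.mono fun t ht => ht.differentiableAt
    have hderiveq : (fun t => fderiv ℝ f (φ t) e) =ᶠ[nhds (0 : ℝ)] deriv g :=
      hg'.mono fun t ht => ht.deriv.symm
    have hdf : DifferentiableAt ℝ (fun w => fderiv ℝ f w e) z :=
      (ContinuousLinearMap.apply ℝ ℝ e).differentiableAt.comp z
        ((hf.fderiv_right (by norm_num : (1 : WithTop ℕ∞) + 1 ≤ 2)).differentiableAt one_ne_zero)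
    have hG : HasDerivAt (fun t => fderiv ℝ f (φ t) e)
        (fderiv ℝ (fun w => fderiv ℝ f w e) z e) 0 := by
      have hdfz := hdf.hasFDerivAt
      rw [← hφ0] at hdfz
      have h := hdfz.comp_hasDerivAt 0 (hφ 0)
      rw [hφ0] at h
      exact h
    have h2 : HasDerivAt (deriv g) (fderiv ℝ (fun w => fderiv ℝ f w e) z e) 0 :=
      hG.congr_of_eventuallyEq hderiveq.symm
    exact second_deriv_nonpos hgmax hd h2
  have k1 := key 1
  have kI := key Complex.I
  unfold lap
  linarith

theorem stmt5 (u : ℂ → ℝ)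
    (hcont : ContinuousOn u (closedBall (0 : ℂ) 1))
    (hnonneg : ∀ z ∈ closedBall (0 : ℂ) 1, 0 ≤ u z)
    (hC2 : ContDiffOn ℝ 2 u {z ∈ ball (0 : ℂ) 1 | 0 < u z})
    (hlap : ∀ z ∈ ball (0 : ℂ) 1, 0 < u z → 1 ≤ lap u z)
    (h0 : 0 < u 0) :
    -- v = u - (1/4)(x² + y²) is subharmonic (nonnegative Laplacian) on ω = {u > 0},
    (∀ z ∈ {z ∈ ball (0 : ℂ) 1 | 0 < u z},
      0 ≤ lap (fun w => u w - (1 / 4) * (w.re ^ 2 + w.im ^ 2)) z) ∧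
    -- v is positive at 0,
    0 < u 0 - (1 / 4) * ((0 : ℂ).re ^ 2 + (0 : ℂ).im ^ 2) ∧
    -- and hence, by the maximum principle, sup u > 1/4:
    ∃ z ∈ closedBall (0 : ℂ) 1, 1 / 4 < u z := by
  -- the open set ω
  have hωopen : IsOpen {z ∈ ball (0 : ℂ) 1 | 0 < u z} := by
    have : {z ∈ ball (0 : ℂ) 1 | 0 < u z} = ball (0 : ℂ) 1 ∩ u ⁻¹' (Set.Ioi 0) := by
      ext w; simp [Set.mem_setOf_eq, and_comm]
    rw [this]
    exact (hcont.mono ball_subset_closedBall).isOpen_inter_preimage isOpen_ball isOpen_Ioi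
  refine ⟨?_, by simpa using h0, ?_⟩
  · intro z hz
    rw [lap_sub_quad u hωopen hC2 hz]
    have := hlap z hz.1 hz.2
    linarith
  · by_contra hcon
    push_neg at hcon
    set u0 := u 0 with hu0
    set ε : ℝ := min 1 (2 * u0) with hε
    have hεpos : 0 < ε := lt_min one_pos (by linarith)
    have hε1 : ε ≤ 1 := min_le_left _ _
    have hεu0 : ε / 4 < u0 := by
      rcases le_total 1 (2 * u0) with h | h
      · have : ε = 1 := min_eq_left h
        rw [this]; linarith
      · have : ε = 2 * u0 := min_eq_right h
        rw [this]; linarith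
    set c : ℝ := (1 - ε) / 4 with hc
    have hcnonneg : 0 ≤ c := by rw [hc]; linarith
    set w : ℂ → ℝ := fun z => u z - c * (z.re ^ 2 + z.im ^ 2) with hw
    have hwcont : ContinuousOn w (closedBall (0 : ℂ) 1) := by
      apply hcont.sub
      exact (continuous_const.mul ((Complex.continuous_re.pow 2).add
        (Complex.continuous_im.pow 2))).continuousOn
    obtain ⟨z0, hz0mem, hz0max⟩ :=
      (isCompact_closedBall (0 : ℂ) 1).exists_isMaxOn
        (⟨0, mem_closedBall_self zero_le_one⟩) hwcont
    have hw0 : w 0 = u0 := by simp [hw, hu0]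
    have hwz0ge : u0 ≤ w z0 := by
      have h := hz0max (mem_closedBall_self zero_le_one)
      rw [← hw0]
      exact h
    -- u z0 must be positive
    have huz0pos : 0 < u z0 := by
      by_contra h
      push_neg at h
      have : w z0 ≤ 0 := by
        have hsq : 0 ≤ z0.re ^ 2 + z0.im ^ 2 := by positivity
        have := mul_nonneg hcnonneg hsq
        simp only [hw]
        linarith
      linarith
    -- z0 must be in the open ball
    have hz0ball : z0 ∈ ball (0 : ℂ) 1 := by
      by_contra h
      have hnorm : ‖z0‖ = 1 := by
        have h1 : ‖z0‖ ≤ 1 := by simpa [Complex.dist_eq] using hz0mem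
        have h2 : ¬ ‖z0‖ < 1 := by simpa [Complex.dist_eq] using h
        linarith [not_lt.mp h2]
      have hsq : z0.re ^ 2 + z0.im ^ 2 = 1 := by
        have h' : z0.re ^ 2 + z0.im ^ 2 = ‖z0‖ ^ 2 := by
          rw [Complex.sq_norm, Complex.normSq_apply]; ring
        rw [h', hnorm, one_pow]
      have : w z0 = u z0 - c := by rw [hw]; simp [hsq]
      have h14 : u z0 ≤ 1 / 4 := hcon z0 hz0mem
      have : w z0 ≤ ε / 4 := by rw [this, hc]; linarith
      linarith
    -- z0 is an interior local max of w
    have hz0ω : z0 ∈ {z ∈ ball (0 : ℂ) 1 | 0 < u z} := ⟨hz0ball, huz0pos⟩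
    have hlocmax : IsLocalMax w z0 := by
      have hnhds : closedBall (0 : ℂ) 1 ∈ nhds z0 :=
        Filter.mem_of_superset (isOpen_ball.mem_nhds hz0ball) ball_subset_closedBall
      exact hz0max.isLocalMax hnhds
    have hwC2 : ContDiffAt ℝ 2 w z0 := by
      have hu : ContDiffAt ℝ 2 u z0 := hC2.contDiffAt (hωopen.mem_nhds hz0ω)
      have hq : ContDiff ℝ 2 (fun z : ℂ => c * (z.re ^ 2 + z.im ^ 2)) := by
        apply contDiff_const.mul
        exact (Complex.reCLM.contDiff.pow 2).add (Complex.imCLM.contDiff.pow 2)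
      exact hu.sub hq.contDiffAt
    have hlapw : lap w z0 = lap u z0 - 4 * c :=
      lap_sub_quad u hωopen hC2 hz0ω c
    have hlapu := hlap z0 hz0ball huz0pos
    have hlapwpos : 0 < lap w z0 := by
      rw [hlapw, hc]; linarith
    have := lap_nonpos_of_isLocalMax w z0 hwC2 hlocmax
    linarith
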